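/- For α > 0, the polynomials r_n^{(α)}(x) = Σ_{j=0}^n (-1)^j binom(n,j) binom(α+n+j-1, n) x^j are orthogonal with respect to the measure α x^{α-1} dx on (0,1): for m ≠ n, ∫_0^1 r_n^{(α)}(x) r_m^{(α)}(x) α x^{α-1} dx = 0, and ∫_0^1 r_n^{(α)}(x)^2 α x^{α-1} dx = α/(α+2n). -/

import Mathlib

/-- Generalized binomial coefficient `x(x-1)⋯(x-k+1)/k!` with real upper argument. -/
noncomputable def gbinom (x : ℝ) (k : ℕ) : ℝ :=
  (∏ i ∈ Finset.range k, (x - i)) / (Nat.factorial k : ℝ)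

/-- The polynomial `r_n^{(α)}(x) = Σ_{j=0}^n (-1)^j C(n,j) C(α+n+j-1, n) x^j`. -/
noncomputable def rPoly (α : ℝ) (n : ℕ) (x : ℝ) : ℝ :=
  ∑ j ∈ Finset.range (n + 1),
    (-1 : ℝ) ^ j * (Nat.choose n j : ℝ) * gbinom (α + n + j - 1) n * x ^ j

open Finset Polynomial

lemma D_succ (n : ℕ) (g : ℕ → ℝ) :
    ∑ j ∈ range (n+2), (-1:ℝ)^j * ((n+1).choose j) * g j
      = (∑ j ∈ range (n+1), (-1:ℝ)^j * (n.choose j) * g j)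
        - ∑ j ∈ range (n+1), (-1:ℝ)^j * (n.choose j) * g (j+1) := by
  rw [Finset.sum_range_succ' (fun j => (-1:ℝ)^j * ((n+1).choose j) * g j) (n+1)]
  rw [Finset.sum_range_succ' (fun j => (-1:ℝ)^j * (n.choose j) * g j) n]
  have h1 : ∀ j, ((n+1).choose (j+1) : ℝ) = (n.choose j : ℝ) + (n.choose (j+1) : ℝ) := by
    intro j; rw [Nat.choose_succ_succ]; push_cast; ring
  have h2 : ∑ j ∈ range (n+1), (-1:ℝ)^(j+1) * ((n+1).choose (j+1)) * g (j+1)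
      = (∑ j ∈ range (n+1), (-1:ℝ)^(j+1) * (n.choose j) * g (j+1))
        + ∑ j ∈ range (n+1), (-1:ℝ)^(j+1) * (n.choose (j+1)) * g (j+1) := by
    rw [← Finset.sum_add_distrib]
    refine Finset.sum_congr rfl fun j _ => ?_
    rw [h1]; ring
  have h3 : ∑ j ∈ range (n+1), (-1:ℝ)^(j+1) * (n.choose (j+1)) * g (j+1)
      = ∑ j ∈ range n, (-1:ℝ)^(j+1) * (n.choose (j+1)) * g (j+1) := by
    rw [Finset.sum_range_succ]; simp
  rw [h2, h3]
  have h4 : ∑ j ∈ range (n+1), (-1:ℝ)^(j+1) * (n.choose j) * g (j+1)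
      = - ∑ j ∈ range (n+1), (-1:ℝ)^j * (n.choose j) * g (j+1) := by
    rw [← Finset.sum_neg_distrib]
    refine Finset.sum_congr rfl fun j _ => ?_
    ring
  rw [h4]; simp only [Nat.choose_zero_right, Nat.cast_one, pow_zero]; ring

lemma D_poly_eq_zero : ∀ (n : ℕ) (p : Polynomial ℝ), p.degree < n →
    ∑ j ∈ range (n+1), (-1:ℝ)^j * (n.choose j) * p.eval (j:ℝ) = 0 := by
  intro n
  induction n with
  | zero =>
    intro p hp
    have : p = 0 := by
      have := Nat.WithBot.lt_zero_iff (n := p.degree) |>.mp (by exact_mod_cast hp)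
      exact Polynomial.degree_eq_bot.mp this
    simp [this]
  | succ n ih =>
    intro p hp
    rw [show n + 1 + 1 = n + 2 from rfl, D_succ]
    have hcomp : ∀ j : ℕ, p.eval ((j:ℝ)+1) = (p.comp (X + C 1)).eval (j:ℝ) := by
      intro j; simp [Polynomial.eval_comp]
    have key : ∑ j ∈ range (n+1), (-1:ℝ)^j * (n.choose j) * p.eval (j:ℝ)
        - ∑ j ∈ range (n+1), (-1:ℝ)^j * (n.choose j) * p.eval ((j+1:ℕ):ℝ)
        = ∑ j ∈ range (n+1), (-1:ℝ)^j * (n.choose j) * (p - p.comp (X + C 1)).eval (j:ℝ) := by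
      rw [← Finset.sum_sub_distrib]
      refine Finset.sum_congr rfl fun j _ => ?_
      have : ((j+1:ℕ):ℝ) = (j:ℝ)+1 := by push_cast; ring
      rw [this, hcomp]; simp [Polynomial.eval_sub]; ring
    rw [key]
    apply ih
    by_cases hp0 : p = 0
    · simp [hp0]
    · have hdeg : (p.comp (X + C 1)).degree = p.degree := by
        have h1 : (p.comp (X + C 1)).natDegree = p.natDegree := by
          rw [Polynomial.natDegree_comp, Polynomial.natDegree_X_add_C, mul_one]
        have hc0 : p.comp (X + C 1) ≠ 0 := by
          intro h
          have := Polynomial.leadingCoeff_comp (p := p) (q := X + C 1)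
            (by rw [Polynomial.natDegree_X_add_C]; norm_num)
          rw [h, Polynomial.leadingCoeff_X_add_C, one_pow, mul_one] at this
          exact hp0 (Polynomial.leadingCoeff_eq_zero.mp this.symm)
        rw [Polynomial.degree_eq_natDegree hc0, Polynomial.degree_eq_natDegree hp0, h1]
      have hlc : p.leadingCoeff = (p.comp (X + C 1)).leadingCoeff := by
        rw [Polynomial.leadingCoeff_comp (by rw [Polynomial.natDegree_X_add_C]; norm_num),
          Polynomial.leadingCoeff_X_add_C, one_pow, mul_one]
      have := Polynomial.degree_sub_lt hdeg.symm hp0 hlc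
      calc (p - p.comp (X + C 1)).degree < p.degree := this
        _ ≤ n := by
          have h5 : p.natDegree < n+1 :=
            (Polynomial.natDegree_lt_iff_degree_lt hp0).mpr (by exact_mod_cast hp)
          exact Polynomial.degree_le_of_natDegree_le (Nat.lt_succ_iff.mp h5)

lemma sum_inv : ∀ (n : ℕ) (x : ℝ), 0 < x →
    ∑ j ∈ range (n+1), (-1:ℝ)^j * (n.choose j) * (1/(x+j)) =
      (Nat.factorial n) / ∏ i ∈ range (n+1), (x+i) := by
  intro n
  induction n with
  | zero => intro x hx; simp
  | succ n ih =>
    intro x hx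
    have hP : ∀ (y : ℝ), 0 < y → ∀ m : ℕ, (0:ℝ) < ∏ i ∈ range m, (y+i) := by
      intro y hy m
      exact Finset.prod_pos fun i _ => by positivity
    rw [show n + 1 + 1 = n + 2 from rfl, D_succ]
    have h1 := ih x hx
    have h2 := ih (x+1) (by linarith)
    have h2' : ∑ j ∈ range (n+1), (-1:ℝ)^j * (n.choose j) * (1/(x+(j+1:ℕ))) =
        (Nat.factorial n) / ∏ i ∈ range (n+1), ((x+1)+i) := by
      rw [← h2]
      refine Finset.sum_congr rfl fun j _ => ?_
      push_cast; ring_nf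
    rw [h1, h2']
    have e1 : ∏ i ∈ range (n+2), (x+i) = (∏ i ∈ range (n+1), (x+i)) * (x+(n+1)) := by
      rw [Finset.prod_range_succ]; push_cast; ring_nf
    have e2 : ∏ i ∈ range (n+2), (x+i) = (∏ i ∈ range (n+1), ((x+1)+i)) * x := by
      rw [Finset.prod_range_succ' (fun i => x + i) (n+1)]
      congr 1
      · refine Finset.prod_congr rfl fun i _ => by push_cast; ring
      · simp
    have hA := hP x hx (n+1)
    have hB := hP (x+1) (by linarith) (n+1)
    have hC : (x+(n+1:ℝ)) > 0 := by positivity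
    rw [div_sub_div _ _ (ne_of_gt hA) (ne_of_gt hB), e1]
    rw [div_eq_div_iff (by positivity) (by positivity)]
    have efact : ((n+1).factorial : ℝ) = (n.factorial : ℝ) * (n+1) := by
      rw [Nat.factorial_succ]; push_cast; ring
    rw [efact]
    have e2' : (∏ i ∈ range (n+1), ((x+1)+i)) * x = (∏ i ∈ range (n+1), (x+i)) * (x+(n+1)) := by
      rw [← e2, e1]
    linear_combination ((n.factorial:ℝ) * ∏ i ∈ range (n+1), (x+(i:ℝ))) * e2'

lemma gbinom_eq (α : ℝ) (n j : ℕ) :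
    gbinom (α + n + j - 1) n = (∏ i ∈ range n, (α + j + i)) / (Nat.factorial n) := by
  unfold gbinom
  congr 1
  rw [← Finset.prod_range_reflect (fun i => α + j + i) n]
  refine Finset.prod_congr rfl fun i hi => ?_
  have hi' : i < n := Finset.mem_range.mp hi
  have : ((n - 1 - i : ℕ) : ℝ) = (n:ℝ) - 1 - i := by
    have h1 : i ≤ n - 1 := Nat.le_sub_one_of_lt hi'
    have h2 : 1 ≤ n := Nat.one_le_of_lt (Nat.lt_of_le_of_lt (Nat.zero_le i) hi')
    push_cast [Nat.cast_sub h1, Nat.cast_sub h2]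
    ring
  rw [this]; ring

lemma T_eq_zero (α : ℝ) (hα : 0 < α) (n k : ℕ) (hk : k < n) :
    ∑ j ∈ range (n+1), (-1:ℝ)^j * (n.choose j) * (gbinom (α+n+j-1) n / (α+j+k)) = 0 := by
  classical
  set q : Polynomial ℝ := ∏ i ∈ range n \ {k}, (X + C (α+i)) with hq
  have hqdeg : q.degree < n := by
    have hcard : (range n \ {k}).card = n - 1 := by
      rw [Finset.card_sdiff_of_subset (by simpa using hk), Finset.card_range, Finset.card_singleton]
    have h1 : q.degree ≤ ((n-1 : ℕ) : WithBot ℕ) := by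
      calc q.degree ≤ ∑ i ∈ range n \ {k}, (X + C (α+i)).degree := Polynomial.degree_prod_le _ _
        _ = ∑ i ∈ range n \ {k}, (1 : WithBot ℕ) := by
            refine Finset.sum_congr rfl fun i _ => Polynomial.degree_X_add_C _
        _ = ((n-1 : ℕ) : WithBot ℕ) := by
            rw [Finset.sum_const, hcard]; simp
    refine lt_of_le_of_lt h1 ?_
    exact_mod_cast Nat.sub_lt (by omega) one_pos
  have hterm : ∀ j : ℕ, gbinom (α+n+j-1) n / (α+j+k) = q.eval (j:ℝ) / (Nat.factorial n) := by
    intro j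
    rw [gbinom_eq]
    have hmem : k ∈ range n := Finset.mem_range.mpr hk
    have hsplit : ∏ i ∈ range n, (α + j + i) = (α + j + k) * ∏ i ∈ range n \ {k}, (α + j + i) :=
      Finset.prod_eq_mul_prod_sdiff_singleton_of_mem hmem (fun i => α + j + (i:ℝ))
    have heval : q.eval (j:ℝ) = ∏ i ∈ range n \ {k}, (α + j + i) := by
      rw [hq, Polynomial.eval_prod]
      refine Finset.prod_congr rfl fun i _ => by simp; ring
    have hne : (α + j + k) ≠ 0 := by positivity
    have hfact : (Nat.factorial n : ℝ) ≠ 0 := by positivity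
    rw [hsplit, heval]
    field_simp
  have : ∑ j ∈ range (n+1), (-1:ℝ)^j * (n.choose j) * (gbinom (α+n+j-1) n / (α+j+k))
      = (∑ j ∈ range (n+1), (-1:ℝ)^j * (n.choose j) * q.eval (j:ℝ)) / (Nat.factorial n) := by
    rw [Finset.sum_div]
    refine Finset.sum_congr rfl fun j _ => ?_
    rw [hterm]; ring
  rw [this, D_poly_eq_zero n q hqdeg, zero_div]

lemma prod_shift_fact (n : ℕ) : ∏ i ∈ range n, ((i:ℝ) - n) = (-1:ℝ)^n * (Nat.factorial n) := by
  have h1 : ∏ i ∈ range n, ((i:ℝ) - n) = ∏ i ∈ range n, (-(((n:ℝ)) - i)) := by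
    refine Finset.prod_congr rfl fun i _ => by ring
  rw [h1]
  have hneg : ∏ i ∈ range n, (-(((n:ℝ)) - i)) = (-1:ℝ)^n * ∏ i ∈ range n, ((n:ℝ) - i) := by
    rw [show (fun i : ℕ => -(((n:ℝ)) - i)) = (fun i : ℕ => (-1:ℝ) * ((n:ℝ) - i)) from funext fun i => by ring]
    rw [Finset.prod_mul_distrib, Finset.prod_const, Finset.card_range]
  rw [hneg]
  congr 1
  have h2 : ∏ i ∈ range n, ((n:ℝ) - i) = ∏ i ∈ range n, ((i:ℝ) + 1) := by
    rw [← Finset.prod_range_reflect (fun i => (i:ℝ) + 1) n]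
    refine Finset.prod_congr rfl fun i hi => ?_
    have hi' : i < n := Finset.mem_range.mp hi
    have ha : i ≤ n - 1 := Nat.le_sub_one_of_lt hi'
    have hb : 1 ≤ n := by omega
    have : ((n - 1 - i : ℕ) : ℝ) = (n:ℝ) - 1 - i := by
      push_cast [Nat.cast_sub ha, Nat.cast_sub hb]; ring
    rw [this]; ring
  rw [h2]
  exact_mod_cast congrArg (Nat.cast : ℕ → ℝ) (Finset.prod_range_add_one_eq_factorial n)

lemma T_diag (α : ℝ) (hα : 0 < α) (n : ℕ) :
    ∑ j ∈ range (n+1), (-1:ℝ)^j * (n.choose j) * (gbinom (α+n+j-1) n / (α+j+n)) =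
      (-1:ℝ)^n * (Nat.factorial n) / ∏ i ∈ range (n+1), (α+n+i) := by
  classical
  set r : Polynomial ℝ := (∏ i ∈ range n, (X + C (α+i))) - C ((-1:ℝ)^n * (Nat.factorial n)) with hr
  have hroot : r.IsRoot (-(α+n)) := by
    rw [hr]
    simp only [Polynomial.IsRoot, Polynomial.eval_sub, Polynomial.eval_prod, Polynomial.eval_add,
      Polynomial.eval_X, Polynomial.eval_C]
    have : ∏ i ∈ range n, (-(α+(n:ℝ)) + (α+i)) = ∏ i ∈ range n, ((i:ℝ) - n) := by
      refine Finset.prod_congr rfl fun i _ => by ring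
    rw [this, prod_shift_fact]; ring
  obtain ⟨Q, hQ⟩ : (X - C (-(α+(n:ℝ)))) ∣ r := Polynomial.dvd_iff_isRoot.mpr hroot
  have hXC : (X : Polynomial ℝ) - C (-(α+(n:ℝ))) = X + C (α+n) := by
    rw [map_neg, sub_neg_eq_add]
  have hQdeg : Q.degree < n := by
    by_cases hQ0 : Q = 0
    · rw [hQ0, Polynomial.degree_zero]; exact bot_lt_iff_ne_bot.mpr (WithBot.coe_ne_bot)
    · have hrdeg : r.degree ≤ n := by
        rw [hr]
        refine le_trans (Polynomial.degree_sub_le _ _) ?_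
        rw [max_le_iff]
        constructor
        · calc (∏ i ∈ range n, (X + C (α+i))).degree
              ≤ ∑ i ∈ range n, (X + C (α+i)).degree := Polynomial.degree_prod_le _ _
            _ = ∑ i ∈ range n, (1 : WithBot ℕ) := by
                refine Finset.sum_congr rfl fun i _ => Polynomial.degree_X_add_C _
            _ ≤ (n : WithBot ℕ) := by rw [Finset.sum_const, Finset.card_range]; simp
        · exact le_trans Polynomial.degree_C_le (by exact_mod_cast Nat.zero_le n)
      have h1 : r.degree = 1 + Q.degree := by
        rw [hQ, Polynomial.degree_mul, hXC, Polynomial.degree_X_add_C]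
      rw [h1] at hrdeg
      rcases Polynomial.degree_eq_natDegree hQ0 ▸ (rfl : Q.degree = Q.degree) with _
      have : Q.degree = (Q.natDegree : WithBot ℕ) := Polynomial.degree_eq_natDegree hQ0
      rw [this] at hrdeg ⊢
      have : (1 : WithBot ℕ) + Q.natDegree = ((1 + Q.natDegree : ℕ) : WithBot ℕ) := by push_cast; rfl
      rw [this] at hrdeg
      have hn : 1 + Q.natDegree ≤ n := by exact_mod_cast hrdeg
      exact_mod_cast by omega
  have hterm : ∀ j : ℕ, gbinom (α+n+j-1) n / (α+j+n)
      = Q.eval (j:ℝ) / (Nat.factorial n) + (-1:ℝ)^n * (1/((α+n)+j)) := by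
    intro j
    rw [gbinom_eq]
    have heval : ∏ i ∈ range n, (α + (j:ℝ) + i) = ((j:ℝ) + (α+n)) * Q.eval (j:ℝ)
        + (-1:ℝ)^n * (Nat.factorial n) := by
      have := congrArg (Polynomial.eval (j:ℝ)) hQ
      rw [hXC] at this
      simp only [Polynomial.eval_sub, Polynomial.eval_prod, Polynomial.eval_add,
        Polynomial.eval_X, Polynomial.eval_C, Polynomial.eval_mul, hr] at this
      have h2 : ∏ i ∈ range n, ((j:ℝ) + (α+i)) = ∏ i ∈ range n, (α + (j:ℝ) + i) := by
        refine Finset.prod_congr rfl fun i _ => by ring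
      rw [h2] at this
      linarith [this]
    rw [heval]
    have h3 : (α + (j:ℝ) + n) ≠ 0 := by positivity
    have h4 : ((α+n) + (j:ℝ)) ≠ 0 := by positivity
    have h5 : (Nat.factorial n : ℝ) ≠ 0 := by positivity
    field_simp
    ring
  have hsum : ∑ j ∈ range (n+1), (-1:ℝ)^j * (n.choose j) * (gbinom (α+n+j-1) n / (α+j+n))
      = (∑ j ∈ range (n+1), (-1:ℝ)^j * (n.choose j) * Q.eval (j:ℝ)) / (Nat.factorial n)
        + (-1:ℝ)^n * ∑ j ∈ range (n+1), (-1:ℝ)^j * (n.choose j) * (1/((α+n)+j)) := by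
    rw [Finset.sum_div, Finset.mul_sum, ← Finset.sum_add_distrib]
    refine Finset.sum_congr rfl fun j _ => ?_
    rw [hterm]; ring
  rw [hsum, D_poly_eq_zero n Q hQdeg, zero_div, zero_add,
    sum_inv n (α+n) (by positivity)]
  have : ∏ i ∈ range (n+1), ((α+(n:ℝ))+i) = ∏ i ∈ range (n+1), (α+n+(i:ℝ)) := rfl
  rw [this]; ring

open MeasureTheory intervalIntegral in
lemma weight_intInt (α : ℝ) (hα : 0 < α) (p : ℕ) :
    IntervalIntegrable (fun x : ℝ => x^p * (α * x^(α-1))) volume 0 1 := by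
  have h1 : IntervalIntegrable (fun x : ℝ => α * x^(α + p - 1)) volume 0 1 :=
    (intervalIntegral.intervalIntegrable_rpow' (by linarith [Nat.cast_nonneg (α := ℝ) p] :
      (-1:ℝ) < α + p - 1)).const_mul α
  rw [intervalIntegrable_iff] at h1 ⊢
  refine h1.congr ?_
  rw [Filter.eventuallyEq_iff_exists_mem]
  refine ⟨Set.Ioc 0 1, ?_, ?_⟩
  · rw [Set.uIoc_of_le (by norm_num : (0:ℝ) ≤ 1)]
    exact self_mem_ae_restrict measurableSet_Ioc
  · intro x hx
    have hx0 : (0:ℝ) < x := hx.1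
    show α * x^(α + p - 1) = x^p * (α * x^(α-1))
    rw [show α + (p:ℝ) - 1 = (p:ℝ) + (α - 1) by ring, Real.rpow_add hx0,
      Real.rpow_natCast]
    ring

open MeasureTheory intervalIntegral in
lemma weight_integral (α : ℝ) (hα : 0 < α) (p : ℕ) :
    ∫ x in (0:ℝ)..1, x^p * (α * x^(α-1)) = α / (α + p) := by
  have hcong : ∫ x in (0:ℝ)..1, x^p * (α * x^(α-1)) = ∫ x in (0:ℝ)..1, α * x^(α + p - 1) := by
    refine intervalIntegral.integral_congr_ae ?_
    filter_upwards with x hx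
    rw [Set.uIoc_of_le (by norm_num : (0:ℝ) ≤ 1)] at hx
    have hx0 : (0:ℝ) < x := hx.1
    rw [show α + (p:ℝ) - 1 = (p:ℝ) + (α - 1) by ring, Real.rpow_add hx0,
      Real.rpow_natCast]
    ring
  rw [hcong, intervalIntegral.integral_const_mul,
    integral_rpow (Or.inl (by linarith [Nat.cast_nonneg (α := ℝ) p] : (-1:ℝ) < α + p - 1))]
  have h1 : (α + (p:ℝ) - 1) + 1 = α + p := by ring
  rw [h1, Real.one_rpow, Real.zero_rpow (by positivity)]
  field_simp
  norm_num

noncomputable def cc (α : ℝ) (n j : ℕ) : ℝ :=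
  (-1 : ℝ) ^ j * (Nat.choose n j : ℝ) * gbinom (α + n + j - 1) n

open MeasureTheory intervalIntegral in
lemma integral_expand (α : ℝ) (hα : 0 < α) (n m : ℕ) :
    ∫ x in (0:ℝ)..1, rPoly α n x * rPoly α m x * (α * x^(α-1)) =
      ∑ k ∈ range (m+1), ∑ j ∈ range (n+1), cc α n j * cc α m k * (α/(α+(j+k:ℕ))) := by
  have hpt : (fun x => rPoly α n x * rPoly α m x * (α * x^(α-1)))
      = fun x => ∑ j ∈ range (n+1), ∑ k ∈ range (m+1),
          cc α n j * cc α m k * (x^(j+k) * (α * x^(α-1))) := by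
    funext x
    unfold rPoly
    rw [Finset.sum_mul_sum, Finset.sum_mul]
    refine Finset.sum_congr rfl fun j _ => ?_
    rw [Finset.sum_mul]
    refine Finset.sum_congr rfl fun k _ => ?_
    unfold cc
    rw [pow_add]
    ring
  rw [hpt]
  rw [intervalIntegral.integral_finset_sum (μ := volume) (a := (0:ℝ)) (b := 1)
    (f := fun j x => ∑ k ∈ range (m+1), cc α n j * cc α m k * (x^(j+k) * (α * x^(α-1))))
    (fun j _ => by
      have hfn : (fun x : ℝ => ∑ k ∈ range (m+1), cc α n j * cc α m k * (x^(j+k) * (α * x^(α-1))))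
          = ∑ k ∈ range (m+1), (fun x : ℝ => cc α n j * cc α m k * (x^(j+k) * (α * x^(α-1)))) := by
        funext x; simp
      rw [hfn]
      exact IntervalIntegrable.sum _ fun k _ => ((weight_intInt α hα (j+k)).const_mul _))]
  have step : ∀ j ∈ range (n+1),
      (∫ x in (0:ℝ)..1, ∑ k ∈ range (m+1), cc α n j * cc α m k * (x^(j+k) * (α * x^(α-1))))
        = ∑ k ∈ range (m+1), cc α n j * cc α m k * (α/(α+(j+k:ℕ))) := by
    intro j _
    rw [intervalIntegral.integral_finset_sum (μ := volume) (a := (0:ℝ)) (b := 1)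
      (f := fun k x => cc α n j * cc α m k * (x^(j+k) * (α * x^(α-1))))
      (fun k _ => ((weight_intInt α hα (j+k)).const_mul _))]
    refine Finset.sum_congr rfl fun k _ => ?_
    rw [intervalIntegral.integral_const_mul, weight_integral α hα (j+k)]
  rw [Finset.sum_congr rfl step, Finset.sum_comm]

lemma inner_sum_eq (α : ℝ) (hα : 0 < α) (n k : ℕ) (ck : ℝ) :
    ∑ j ∈ range (n+1), cc α n j * ck * (α/(α+(j+k:ℕ)))
      = ck * α * ∑ j ∈ range (n+1), (-1:ℝ)^j * (n.choose j) * (gbinom (α+n+j-1) n / (α+j+k)) := by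
  rw [Finset.mul_sum]
  refine Finset.sum_congr rfl fun j _ => ?_
  unfold cc
  have hd : (α + (j:ℝ) + k) ≠ 0 := by positivity
  have hcast : ((j+k:ℕ):ℝ) = (j:ℝ) + k := by push_cast; ring
  rw [hcast, show α + ((j:ℝ) + k) = α + j + k by ring]
  field_simp

lemma integral_ortho (α : ℝ) (hα : 0 < α) (n m : ℕ) (hmn : m < n) :
    ∫ x in (0:ℝ)..1, rPoly α n x * rPoly α m x * (α * x^(α-1)) = 0 := by
  rw [integral_expand α hα n m]
  refine Finset.sum_eq_zero fun k hk => ?_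
  have hk' : k < n := by have := Finset.mem_range.mp hk; omega
  rw [inner_sum_eq α hα n k (cc α m k), T_eq_zero α hα n k hk']
  ring

lemma integral_diag (α : ℝ) (hα : 0 < α) (n : ℕ) :
    ∫ x in (0:ℝ)..1, rPoly α n x ^ 2 * (α * x^(α-1)) = α / (α + 2*n) := by
  have hsq : (fun x => rPoly α n x ^ 2 * (α * x^(α-1)))
      = fun x => rPoly α n x * rPoly α n x * (α * x^(α-1)) := by
    funext x; ring
  rw [hsq, integral_expand α hα n n, Finset.sum_range_succ]
  have hz : ∑ k ∈ range n, ∑ j ∈ range (n+1), cc α n j * cc α n k * (α/(α+(j+k:ℕ))) = 0 := by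
    refine Finset.sum_eq_zero fun k hk => ?_
    rw [inner_sum_eq α hα n k (cc α n k), T_eq_zero α hα n k (Finset.mem_range.mp hk)]
    ring
  rw [hz, zero_add, inner_sum_eq α hα n n (cc α n n), T_diag α hα n]
  have hcc : cc α n n = (-1:ℝ)^n * ((∏ i ∈ range n, (α + n + i)) / (Nat.factorial n)) := by
    unfold cc
    rw [Nat.choose_self, gbinom_eq α n n, Nat.cast_one]
    ring
  rw [hcc]
  have hsplit : ∏ i ∈ range (n+1), (α+(n:ℝ)+i) = (∏ i ∈ range n, (α+(n:ℝ)+i)) * (α+2*n) := by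
    rw [Finset.prod_range_succ]; ring
  rw [hsplit]
  have hP : (0:ℝ) < ∏ i ∈ range n, (α+(n:ℝ)+i) := Finset.prod_pos fun i _ => by positivity
  have h2n : (0:ℝ) < α + 2*n := by positivity
  have hf : (0:ℝ) < (Nat.factorial n : ℝ) := by positivity
  have hsign : ((-1:ℝ))^n * (-1:ℝ)^n = 1 := by rw [← mul_pow]; norm_num
  field_simp
  linear_combination hsign

theorem rPoly_orthogonality (α : ℝ) (hα : 0 < α) :
    (∀ n m : ℕ, n ≠ m →
        ∫ x in (0 : ℝ)..1, rPoly α n x * rPoly α m x * (α * x ^ (α - 1)) = 0) ∧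
      ∀ n : ℕ,
        ∫ x in (0 : ℝ)..1, rPoly α n x ^ 2 * (α * x ^ (α - 1)) = α / (α + 2 * n) := by
  constructor
  · intro n m hnm
    rcases Nat.lt_or_ge m n with h | h
    · exact integral_ortho α hα n m h
    · have h' : n < m := lt_of_le_of_ne h hnm
      simp only [show ∀ x : ℝ, rPoly α n x * rPoly α m x = rPoly α m x * rPoly α n x from
        fun x => mul_comm _ _]
      exact integral_ortho α hα m n h'
  · intro n
    exact integral_diag α hα n
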